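/- Let φ ∈ L_CPL, let p ∈ Var(φ), and let V = Var(φ). Then φ is CPL-satisfiable if and only if the FP-abduction problem P = ⟨∅, Pr(φ), {p}, {0,1}⟩ has a full solution. -/

import Mathlib

open scoped Classical

/-- Classical propositional formulas (the language `L_CPL`), built from
propositional variables (indexed by `ℕ`) using ¬, ∧, ∨. -/
inductive CPL where
  | var : ℕ → CPL
  | neg : CPL → CPL
  | and : CPL → CPL → CPL
  | or : CPL → CPL → CPL
deriving DecidableEq

namespace CPL

/-- The set of propositional variables occurring in a formula. -/
def vars : CPL → Finset ℕ
  | var p => {p}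
  | neg φ => vars φ
  | and φ χ => vars φ ∪ vars χ
  | or φ χ => vars φ ∪ vars χ

/-- Classical evaluation of a formula under a Boolean valuation. -/
def eval (v : ℕ → Bool) : CPL → Bool
  | var p => v p
  | neg φ => !eval v φ
  | and φ χ => eval v φ && eval v χ
  | or φ χ => eval v φ || eval v χ

/-- Evaluation of a formula at a state given as a set of variables:
the variables in `X` are true, all others false. -/
def evalSet (X : Finset ℕ) (φ : CPL) : Bool := eval (fun p => decide (p ∈ X)) φ

/-- CPL-satisfiability. -/
def Satisfiable (φ : CPL) : Prop := ∃ v, eval v φ = true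

/-- CPL-validity. -/
def Valid (φ : CPL) : Prop := ∀ v, eval v φ = true

/-- Classical entailment `φ ⊨_CPL χ`. -/
def Entails (φ χ : CPL) : Prop := ∀ v, eval v φ = true → eval v χ = true

/-- A literal: a variable or a negated variable. -/
def IsLiteral (φ : CPL) : Prop := (∃ p, φ = var p) ∨ ∃ p, φ = neg (var p)

/-- An `L_CPL`-term: a conjunction of literals. -/
inductive IsTerm : CPL → Prop
  | lit {φ} : IsLiteral φ → IsTerm φ
  | conj {φ χ} : IsTerm φ → IsTerm χ → IsTerm (and φ χ)

/-- A conjunction of propositional variables. -/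
inductive IsConjVars : CPL → Prop
  | var (p : ℕ) : IsConjVars (var p)
  | conj {φ χ} : IsConjVars φ → IsConjVars χ → IsConjVars (and φ χ)

/-- A disjunction of propositional variables. -/
inductive IsDisjVars : CPL → Prop
  | var (p : ℕ) : IsDisjVars (var p)
  | disj {φ χ} : IsDisjVars φ → IsDisjVars χ → IsDisjVars (or φ χ)

/-- Variables occurring as positive literals (in a term). -/
def posVars : CPL → Finset ℕ
  | var p => {p}
  | neg _ => ∅
  | and φ χ => posVars φ ∪ posVars χ
  | or _ _ => ∅

/-- Variables occurring as negated literals (in a term). -/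
def negVars : CPL → Finset ℕ
  | var _ => ∅
  | neg (var p) => {p}
  | neg _ => ∅
  | and φ χ => negVars φ ∪ negVars χ
  | or _ _ => ∅

/-- The literals occurring in a term. -/
def lits (φ : CPL) : Finset CPL :=
  (posVars φ).image var ∪ (negVars φ).image (fun p => neg (var p))

end CPL

/-- A state (possible world) over a finite set `V` of variables: a subset of `V`. -/
abbrev World (V : Finset ℕ) := {X : Finset ℕ // X ⊆ V}

/-- A probabilistic model for `V`: a finitely additive probability measure
`μ : 2^(2^V) → [0,1]`. -/
structure ProbModel (V : Finset ℕ) where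
  μ : Set (World V) → ℝ
  nonneg : ∀ A, 0 ≤ μ A
  le_one : ∀ A, μ A ≤ 1
  m_univ : μ Set.univ = 1
  m_empty : μ ∅ = 0
  m_add : ∀ A B : Set (World V), Disjoint A B → μ (A ∪ B) = μ A + μ B

/-- The truth set `‖φ‖_M` of a classical formula in a probabilistic model for `V`. -/
def truthSet (V : Finset ℕ) (φ : CPL) : Set (World V) :=
  {w | CPL.evalSet w.1 φ = true}

/-- Comparison symbols ◇ ∈ {≤, <, >, ≥}. -/
inductive Ineq where
  | le | lt | gt | ge
deriving DecidableEq

/-- The relation denoted by a comparison symbol. -/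
def Ineq.holds : Ineq → ℝ → ℝ → Prop
  | le, x, c => x ≤ c
  | lt, x, c => x < c
  | gt, x, c => x > c
  | ge, x, c => x ≥ c

/-- Formulas of the probabilistic language `L^Q_Pr`, built from probabilistic atoms
`Pr(φ)` and `Pr(φ)◇c̄` using ¬, △, ⊙, ⊕, →. -/
inductive FP where
  | prob : CPL → FP
  | probIneq : CPL → Ineq → ℚ → FP
  | neg : FP → FP
  | delta : FP → FP
  | conj : FP → FP → FP
  | disj : FP → FP → FP
  | impl : FP → FP → FP
deriving DecidableEq

namespace FP

/-- Well-formedness: all rational constants lie in `[0,1] ∩ ℚ`. -/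
def WF : FP → Prop
  | prob _ => True
  | probIneq _ _ c => 0 ≤ c ∧ c ≤ 1
  | neg α => WF α
  | delta α => WF α
  | conj α β => WF α ∧ WF β
  | disj α β => WF α ∧ WF β
  | impl α β => WF α ∧ WF β

/-- The variables of an `L^Q_Pr`-formula. -/
def vars : FP → Finset ℕ
  | prob φ => φ.vars
  | probIneq φ _ _ => φ.vars
  | neg α => vars α
  | delta α => vars α
  | conj α β => vars α ∪ vars β
  | disj α β => vars α ∪ vars β
  | impl α β => vars α ∪ vars β

/-- The events `E(α)`: the classical formulas occurring in probabilistic atoms of `α`. -/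
def events : FP → Finset CPL
  | prob φ => {φ}
  | probIneq φ _ _ => {φ}
  | neg α => events α
  | delta α => events α
  | conj α β => events α ∪ events β
  | disj α β => events α ∪ events β
  | impl α β => events α ∪ events β

/-- The FP-interpretation `I_M` induced by a probabilistic model `M`. -/
noncomputable def interp {V : Finset ℕ} (M : ProbModel V) : FP → ℝ
  | prob φ => M.μ (truthSet V φ)
  | probIneq φ d c => if d.holds (M.μ (truthSet V φ)) (c : ℝ) then 1 else 0
  | neg α => 1 - interp M α
  | delta α => if interp M α = 1 then 1 else 0
  | conj α β => max 0 (interp M α + interp M β - 1)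
  | disj α β => min 1 (interp M α + interp M β)
  | impl α β => min 1 (1 - interp M α + interp M β)

/-- `α` is FP-satisfiable: `I_M(α) = 1` in some probabilistic model for `Var(α)`. -/
def Satisfiable (α : FP) : Prop := ∃ M : ProbModel α.vars, interp M α = 1

/-- `α` is FP-valid: `I_M(α) = 1` in every probabilistic model for `Var(α)`. -/
def Valid (α : FP) : Prop := ∀ M : ProbModel α.vars, interp M α = 1

/-- `α ⊨_FP β`: `I_M(β) = 1` in every probabilistic model for the variables of
`{α, β}` with `I_M(α) = 1`. -/
def Entails1 (α β : FP) : Prop :=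
  ∀ M : ProbModel (α.vars ∪ β.vars), interp M α = 1 → interp M β = 1

/-- The variables of a finite set of `L^Q_Pr`-formulas. -/
def varsSet (Γ : Finset FP) : Finset ℕ := Γ.sup vars

/-- A finite set `Γ` is FP-satisfiable (`Γ ⊭_FP ⊥`): some probabilistic model for
the variables of `Γ` makes every member of `Γ` equal to `1`. -/
def SetSatisfiable (Γ : Finset FP) : Prop :=
  ∃ M : ProbModel (varsSet Γ), ∀ γ ∈ Γ, interp M γ = 1

/-- `Γ ⊨_FP δ`: every probabilistic model for the variables of `Γ ∪ {δ}` satisfying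
all of `Γ` satisfies `δ`. -/
def EntailsFin (Γ : Finset FP) (δ : FP) : Prop :=
  ∀ M : ProbModel (varsSet Γ ∪ δ.vars), (∀ γ ∈ Γ, interp M γ = 1) → interp M δ = 1

/-- `Γ ⊨^cons_FP δ`: `Γ ⊨_FP δ` and `Γ ⊭_FP ⊥`. -/
def ConsEntails (Γ : Finset FP) (δ : FP) : Prop :=
  EntailsFin Γ δ ∧ SetSatisfiable Γ

/-- The set of permitted values `V_Pr(Pr(φ)◇c̄)`. -/
def permittedValues (φ : CPL) (d : Ineq) (c : ℚ) : Set ℝ :=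
  {x | ∃ (V : Finset ℕ) (M : ProbModel V), φ.vars ⊆ V ∧
      interp M (probIneq φ d c) = 1 ∧ M.μ (truthSet V φ) = x}

end FP

/-- Formulas of the Łukasiewicz language `L^Q_Ł`, built from propositional variables
and truth-constant literals `p◇c̄` using ¬, △, ⊙, ⊕, →. -/
inductive Luk where
  | var : ℕ → Luk
  | ineq : ℕ → Ineq → ℚ → Luk
  | neg : Luk → Luk
  | delta : Luk → Luk
  | conj : Luk → Luk → Luk
  | disj : Luk → Luk → Luk
  | impl : Luk → Luk → Luk
deriving DecidableEq

/-- An Ł-valuation: a function `Var → [0,1]`. -/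
structure LukVal where
  v : ℕ → ℝ
  mem : ∀ p, v p ∈ Set.Icc (0 : ℝ) 1

/-- Extension of an Ł-valuation to all `L^Q_Ł`-formulas. -/
noncomputable def LukVal.eval (val : LukVal) : Luk → ℝ
  | .var p => val.v p
  | .ineq p d c => if d.holds (val.v p) (c : ℝ) then 1 else 0
  | .neg φ => 1 - val.eval φ
  | .delta φ => if val.eval φ = 1 then 1 else 0
  | .conj φ χ => max 0 (val.eval φ + val.eval χ - 1)
  | .disj φ χ => min 1 (val.eval φ + val.eval χ)
  | .impl φ χ => min 1 (1 - val.eval φ + val.eval χ)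

namespace Luk

/-- Well-formedness: all rational constants lie in `[0,1] ∩ ℚ`. -/
def WF : Luk → Prop
  | var _ => True
  | ineq _ _ c => 0 ≤ c ∧ c ≤ 1
  | neg φ => WF φ
  | delta φ => WF φ
  | conj φ χ => WF φ ∧ WF χ
  | disj φ χ => WF φ ∧ WF χ
  | impl φ χ => WF φ ∧ WF χ

/-- `Φ ⊨_Ł χ` for a finite set `Φ`. -/
def EntailsFin (Φ : Finset Luk) (χ : Luk) : Prop :=
  ∀ val : LukVal, (∀ φ ∈ Φ, val.eval φ = 1) → val.eval χ = 1

/-- `φ` is Ł-valid. -/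
def ValidL (φ : Luk) : Prop := ∀ val : LukVal, val.eval φ = 1

/-- A set of `L^Q_Ł`-formulas is Ł-satisfiable. -/
def SatisfiableSet (S : Set Luk) : Prop := ∃ val : LukVal, ∀ φ ∈ S, val.eval φ = 1

/-- The probabilistic counterpart `φ^Pr` of a Łukasiewicz formula. -/
def toFP : Luk → FP
  | var p => .prob (.var p)
  | ineq p d c => .probIneq (.var p) d c
  | neg φ => .neg (toFP φ)
  | delta φ => .delta (toFP φ)
  | conj φ χ => .conj (toFP φ) (toFP χ)
  | disj φ χ => .disj (toFP φ) (toFP χ)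
  | impl φ χ => .impl (toFP φ) (toFP χ)

end Luk

namespace FP

/-- The outer counterpart `α^↑` of an `L^Q_Pr`-formula, replacing each atom `Pr(φ)`
by the fresh variable `e φ` (and `Pr(φ)◇c̄` by `(e φ)◇c̄`). -/
def outer (e : CPL → ℕ) : FP → Luk
  | prob φ => .var (e φ)
  | probIneq φ d c => .ineq (e φ) d c
  | neg α => .neg (outer e α)
  | delta α => .delta (outer e α)
  | conj α β => .conj (outer e α) (outer e β)
  | disj α β => .disj (outer e α) (outer e β)
  | impl α β => .impl (outer e α) (outer e β)

end FP

/-- The ⊙-conjunction of a (nonempty) list of `L^Q_Pr`-formulas. -/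
def bigConjFP : List FP → FP
  | [] => .probIneq (.var 0) .ge 0
  | a :: t => t.foldl .conj a

/-- The ∨-disjunction of a (nonempty) list of classical formulas. -/
def bigDisjCPL : List CPL → CPL
  | [] => .var 0
  | a :: t => t.foldl .or a

/-- The PIT `⊙_i Pr(τ_i)≤c̄_i ⊙ ⊙_i Pr(τ_i)≥c̄_i` associated with the list of
pairs `(τ_i, c_i)`. -/
def completePITFormula (L : List (CPL × ℚ)) : FP :=
  bigConjFP (L.map (fun t => FP.probIneq t.1 .le t.2) ++
             L.map (fun t => FP.probIneq t.1 .ge t.2))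

/-- `τ` is an `L_CPL`-term containing, for every `p ∈ V`, exactly one of the
literals `p` and `¬p` (and no other variables). -/
def IsCompleteTermOver (V : Finset ℕ) (τ : CPL) : Prop :=
  CPL.IsTerm τ ∧ τ.vars ⊆ V ∧ ∀ p ∈ V, (p ∈ τ.posVars ↔ p ∉ τ.negVars)

/-- Membership in `𝒱 = {0, 1/n, …, (n−1)/n, 1}`. -/
def memVSet (n : ℕ) (c : ℚ) : Prop := ∃ k : ℕ, k ≤ n ∧ c = (k : ℚ) / (n : ℚ)

/-- The data `(τ_i, c_i)` of a `⟨V,𝒱⟩`-complete PIT (with `𝒱` given by `n`). -/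
def IsCompletePIT (V : Finset ℕ) (n : ℕ) (L : List (CPL × ℚ)) : Prop :=
  (L.map Prod.fst).Nodup ∧
  (∀ t ∈ L, IsCompleteTermOver V t.1 ∧ memVSet n t.2) ∧
  (L.map Prod.snd).sum = 1

/-- A measure is coherent with a value assignment `pr` on the events `E`. -/
def coherent {V : Finset ℕ} (M : ProbModel V) (E : Finset CPL) (pr : CPL → ℚ) : Prop :=
  ∀ ψ ∈ E, M.μ (truthSet V ψ) = (pr ψ : ℝ)

/-- Conditional probability `Pr_μ(φ | χ) = μ(‖φ∧χ‖)/μ(‖χ‖)`. -/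
noncomputable def condProb {V : Finset ℕ} (M : ProbModel V) (φ χ : CPL) : ℝ :=
  M.μ (truthSet V (CPL.and φ χ)) / M.μ (truthSet V χ)

/-- `τ` is a solution to the PrAP `⟨{φ}, χ, H, E, pr⟩`: an `L_CPL`-term composed of
literals from `H` s.t. `φ, τ ⊨_CPL χ` and some probabilistic model coherent with `pr`
gives `μ(‖φ∧τ‖) > 0`. -/
def IsPrAPSolution (φ χ : CPL) (H E : Finset CPL) (pr : CPL → ℚ) (τ : CPL) : Prop :=
  CPL.IsTerm τ ∧ τ.lits ⊆ H ∧
  (∀ v, CPL.eval v φ = true → CPL.eval v τ = true → CPL.eval v χ = true) ∧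
  ∃ M : ProbModel (φ.vars ∪ χ.vars),
    coherent M E pr ∧ 0 < M.μ (truthSet (φ.vars ∪ χ.vars) (CPL.and φ τ))

/-- `τ` is a preferred solution: a solution s.t. for every other solution `σ` there is
a probabilistic model coherent with `pr` with `μ(‖τ‖) ≥ μ(‖σ‖)`. -/
def IsPreferredPrAPSolution (φ χ : CPL) (H E : Finset CPL) (pr : CPL → ℚ) (τ : CPL) : Prop :=
  IsPrAPSolution φ χ H E pr τ ∧
  ∀ σ, IsPrAPSolution φ χ H E pr σ → σ ≠ τ →
    ∃ M : ProbModel (φ.vars ∪ χ.vars),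
      coherent M E pr ∧
      M.μ (truthSet (φ.vars ∪ χ.vars) σ) ≤ M.μ (truthSet (φ.vars ∪ χ.vars) τ)

/-- The FP-counterpart `Ξ_p = {Pr(ψ)≈c̄ : ψ ∈ E, p(ψ) = c}` of a value assignment,
where `Pr(ψ)≈c̄` abbreviates `(Pr(ψ)≥c̄) ⊙ (Pr(ψ)≤c̄)`. -/
def XiP (E : Finset CPL) (pr : CPL → ℚ) : Finset FP :=
  E.image (fun ψ => FP.conj (FP.probIneq ψ .ge (pr ψ)) (FP.probIneq ψ .le (pr ψ)))

/-- The next weakest PIL `λ^♭_𝒱` of the PIL `Pr(τ)◇(k/n)`. -/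
def flatPIL (n : ℕ) (τ : CPL) (d : Ineq) (k : ℕ) : FP :=
  match d with
  | .ge => FP.probIneq τ .gt (((k : ℚ) - 1) / (n : ℚ))
  | .gt => FP.probIneq τ .ge ((k : ℚ) / (n : ℚ))
  | .le => FP.probIneq τ .lt (((k : ℚ) + 1) / (n : ℚ))
  | .lt => FP.probIneq τ .le ((k : ℚ) / (n : ℚ))

/-- The theory `Ψ_Γ = Γ^↑ ∪ {p_φ → p_χ : φ, χ ∈ E[Γ], φ ⊨_CPL χ}`. -/
def PsiGamma (Γ : Finset FP) (e : CPL → ℕ) : Set Luk :=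
  (fun α => FP.outer e α) '' (↑Γ : Set FP) ∪
  {ψ | ∃ φ ∈ Γ.sup FP.events, ∃ χ ∈ Γ.sup FP.events,
        CPL.Entails φ χ ∧ ψ = Luk.impl (.var (e φ)) (.var (e χ))}

/-- The conjunction `hd ∧ ⋀_{q ∈ s} q`. -/
def conjVarsFrom (hd : CPL) (s : Finset ℕ) : CPL :=
  (s.sort (· ≤ ·)).foldl (fun acc q => CPL.and acc (CPL.var q)) hd
/-! ### Auxiliary lemmas for stmt18 -/

lemma ProbModel.mono {V : Finset ℕ} (M : ProbModel V) {A B : Set (World V)}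
    (h : A ⊆ B) : M.μ A ≤ M.μ B := by
  have hadd := M.m_add A (B \ A) disjoint_sdiff_self_right
  rw [Set.union_diff_cancel h] at hadd
  have := M.nonneg (B \ A)
  linarith

noncomputable def diracModel {V : Finset ℕ} (w : World V) : ProbModel V where
  μ A := if w ∈ A then 1 else 0
  nonneg A := by split <;> norm_num
  le_one A := by split <;> norm_num
  m_univ := by simp
  m_empty := by simp
  m_add A B h := by
    by_cases hA : w ∈ A <;> by_cases hB : w ∈ B
    · exact absurd hB (Set.disjoint_left.mp h hA)
    all_goals simp [Set.mem_union, hA, hB]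

def liftWorld {W₁ W₂ : Finset ℕ} (h : W₁ ⊆ W₂) (X : World W₁) : World W₂ :=
  ⟨X.1, X.2.trans h⟩

noncomputable def pullModel {W₁ W₂ : Finset ℕ} (h : W₁ ⊆ W₂) (M : ProbModel W₁) :
    ProbModel W₂ where
  μ A := M.μ (liftWorld h ⁻¹' A)
  nonneg A := M.nonneg _
  le_one A := M.le_one _
  m_univ := by rw [Set.preimage_univ, M.m_univ]
  m_empty := by rw [Set.preimage_empty, M.m_empty]
  m_add A B hd := by rw [Set.preimage_union, M.m_add _ _ (hd.preimage _)]

lemma interp_pull {W₁ W₂ : Finset ℕ} (h : W₁ ⊆ W₂) (M : ProbModel W₁) (α : FP) :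
    FP.interp (pullModel h M) α = FP.interp M α := by
  induction α with
  | prob ψ => rfl
  | probIneq ψ d c => rfl
  | neg a ih => simp [FP.interp, ih]
  | delta a ih => simp [FP.interp, ih]
  | conj a b iha ihb => simp [FP.interp, iha, ihb]
  | disj a b iha ihb => simp [FP.interp, iha, ihb]
  | impl a b iha ihb => simp [FP.interp, iha, ihb]

lemma eval_congr (v w : ℕ → Bool) (φ : CPL) (h : ∀ q ∈ φ.vars, v q = w q) :
    CPL.eval v φ = CPL.eval w φ := by
  induction φ with
  | var q => exact h q (by simp [CPL.vars])
  | neg ψ ih => simp only [CPL.eval]; rw [ih h]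
  | and ψ χ ih1 ih2 =>
      simp only [CPL.eval]
      rw [ih1 (fun q hq => h q (by simp [CPL.vars, hq])),
        ih2 (fun q hq => h q (by simp [CPL.vars, hq]))]
  | or ψ χ ih1 ih2 =>
      simp only [CPL.eval]
      rw [ih1 (fun q hq => h q (by simp [CPL.vars, hq])),
        ih2 (fun q hq => h q (by simp [CPL.vars, hq]))]

def litOf (v : ℕ → Bool) (q : ℕ) : CPL :=
  if v q then CPL.var q else CPL.neg (CPL.var q)

lemma litOf_isLiteral (v : ℕ → Bool) (q : ℕ) : CPL.IsLiteral (litOf v q) := by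
  unfold litOf; split
  · exact Or.inl ⟨q, rfl⟩
  · exact Or.inr ⟨q, rfl⟩

lemma litOf_vars (v : ℕ → Bool) (q : ℕ) : (litOf v q).vars = {q} := by
  unfold litOf; split <;> simp [CPL.vars]

lemma litOf_pos (v : ℕ → Bool) (q p : ℕ) :
    p ∈ (litOf v q).posVars ↔ p = q ∧ v q = true := by
  unfold litOf; split <;> simp_all [CPL.posVars]

lemma litOf_neg (v : ℕ → Bool) (q p : ℕ) :
    p ∈ (litOf v q).negVars ↔ p = q ∧ v q = false := by
  unfold litOf; split <;> simp_all [CPL.negVars]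

lemma litOf_eval (v w : ℕ → Bool) (q : ℕ) :
    CPL.eval w (litOf v q) = true ↔ w q = v q := by
  unfold litOf; split <;> rename_i hq <;> simp [CPL.eval, hq]

def mkTerm (v : ℕ → Bool) : List ℕ → CPL
  | [] => CPL.var 0
  | [q] => litOf v q
  | q :: r :: t => CPL.and (litOf v q) (mkTerm v (r :: t))

lemma mkTerm_isTerm (v : ℕ → Bool) : ∀ l : List ℕ, l ≠ [] → CPL.IsTerm (mkTerm v l)
  | [q], _ => .lit (litOf_isLiteral v q)
  | q :: r :: t, _ =>
      .conj (.lit (litOf_isLiteral v q)) (mkTerm_isTerm v (r :: t) (by simp))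

lemma mkTerm_vars (v : ℕ → Bool) : ∀ l : List ℕ, l ≠ [] →
    (mkTerm v l).vars = l.toFinset
  | [q], _ => by simp [mkTerm, litOf_vars]
  | q :: r :: t, _ => by
      show (CPL.and _ _).vars = _
      rw [CPL.vars, litOf_vars, mkTerm_vars v (r :: t) (by simp)]
      simp only [List.toFinset_cons, ← Finset.insert_eq]

lemma mkTerm_pos (v : ℕ → Bool) (p : ℕ) : ∀ l : List ℕ, l ≠ [] →
    (p ∈ (mkTerm v l).posVars ↔ p ∈ l ∧ v p = true)
  | [q], _ => by
      rw [show mkTerm v [q] = litOf v q from rfl, litOf_pos]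
      constructor
      · rintro ⟨rfl, h⟩; simp [h]
      · rintro ⟨hq, h⟩; simp at hq; subst hq; exact ⟨rfl, h⟩
  | q :: r :: t, _ => by
      show p ∈ (CPL.and _ _).posVars ↔ _
      rw [CPL.posVars, Finset.mem_union, litOf_pos, mkTerm_pos v p (r :: t) (by simp)]
      constructor
      · rintro (⟨rfl, h⟩ | ⟨hm, h⟩)
        · exact ⟨by simp, h⟩
        · exact ⟨by simp [hm], h⟩
      · rintro ⟨hm, h⟩
        rcases List.mem_cons.mp hm with rfl | hm
        · exact Or.inl ⟨rfl, h⟩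
        · exact Or.inr ⟨hm, h⟩

lemma mkTerm_negv (v : ℕ → Bool) (p : ℕ) : ∀ l : List ℕ, l ≠ [] →
    (p ∈ (mkTerm v l).negVars ↔ p ∈ l ∧ v p = false)
  | [q], _ => by
      rw [show mkTerm v [q] = litOf v q from rfl, litOf_neg]
      constructor
      · rintro ⟨rfl, h⟩; simp [h]
      · rintro ⟨hq, h⟩; simp at hq; subst hq; exact ⟨rfl, h⟩
  | q :: r :: t, _ => by
      show p ∈ (CPL.and _ _).negVars ↔ _
      rw [CPL.negVars, Finset.mem_union, litOf_neg, mkTerm_negv v p (r :: t) (by simp)]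
      constructor
      · rintro (⟨rfl, h⟩ | ⟨hm, h⟩)
        · exact ⟨by simp, h⟩
        · exact ⟨by simp [hm], h⟩
      · rintro ⟨hm, h⟩
        rcases List.mem_cons.mp hm with rfl | hm
        · exact Or.inl ⟨rfl, h⟩
        · exact Or.inr ⟨hm, h⟩

lemma mkTerm_eval (v w : ℕ → Bool) : ∀ l : List ℕ, l ≠ [] →
    (CPL.eval w (mkTerm v l) = true ↔ ∀ q ∈ l, w q = v q)
  | [q], _ => by
      rw [show mkTerm v [q] = litOf v q from rfl, litOf_eval]
      simp
  | q :: r :: t, _ => by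
      show CPL.eval w (CPL.and _ _) = true ↔ _
      rw [show CPL.eval w (CPL.and (litOf v q) (mkTerm v (r :: t)))
            = (CPL.eval w (litOf v q) && CPL.eval w (mkTerm v (r :: t))) from rfl,
        Bool.and_eq_true, litOf_eval, mkTerm_eval v w (r :: t) (by simp)]
      constructor
      · rintro ⟨h1, h2⟩ x hx
        rcases List.mem_cons.mp hx with rfl | hx
        · exact h1
        · exact h2 x hx
      · intro h
        exact ⟨h q (by simp), fun x hx => h x (by simp [hx])⟩

lemma indicator_conj_one {x c : ℝ}
    (h : max 0 ((if x ≤ c then (1 : ℝ) else 0) + (if x ≥ c then (1 : ℝ) else 0) - 1) = 1) :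
    x = c := by
  by_cases h2 : x ≤ c
  · by_cases h3 : x ≥ c
    · linarith
    · rw [if_pos h2, if_neg h3] at h
      norm_num at h
  · rw [if_neg h2] at h
    have h3 : x ≥ c := le_of_lt (lt_of_not_ge h2)
    rw [if_pos h3] at h
    norm_num at h

/-- For `φ ∈ L_CPL`, `p ∈ Var(φ)`, and `V = Var(φ)`: `φ` is
CPL-satisfiable iff the FP-abduction problem `P = ⟨∅, Pr(φ), {p}, {0,1}⟩` has a full
solution, i.e. a `⟨V,{0,1}⟩`-complete PIT `θ` with `θ ⊨^cons_FP Pr(φ)`. -/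
theorem stmt18 (φ : CPL) (p : ℕ) (hp : p ∈ φ.vars) :
    φ.Satisfiable ↔
      ∃ L : List (CPL × ℚ), L ≠ [] ∧ IsCompletePIT φ.vars 1 L ∧
        FP.ConsEntails {completePITFormula L} (FP.prob φ) := by
  constructor
  · rintro ⟨v, hv⟩
    set l : List ℕ := φ.vars.sort (· ≤ ·) with hl_def
    have hl : l ≠ [] := by
      intro hc
      have : p ∈ l := (Finset.mem_sort _).mpr hp
      rw [hc] at this; exact absurd this List.not_mem_nil
    have hlf : l.toFinset = φ.vars := Finset.sort_toFinset _ _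
    set τ : CPL := mkTerm v l with hτ_def
    have hτvars : τ.vars = φ.vars := by rw [hτ_def, mkTerm_vars v l hl, hlf]
    have hred : completePITFormula [(τ, 1)] =
        FP.conj (FP.probIneq τ .le 1) (FP.probIneq τ .ge 1) := rfl
    have hVθ : FP.varsSet {completePITFormula [(τ, 1)]} = φ.vars := by
      rw [FP.varsSet, Finset.sup_singleton, hred]
      show τ.vars ∪ τ.vars = φ.vars
      rw [Finset.union_self, hτvars]
    -- the subset fact ‖τ‖ ⊆ ‖φ‖ over any world set
    have hsub : ∀ W : Finset ℕ, truthSet W τ ⊆ truthSet W φ := by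
      intro W w hw
      have hagree := (mkTerm_eval v (fun q => decide (q ∈ w.1)) l hl).mp hw
      show CPL.evalSet w.1 φ = true
      rw [CPL.evalSet, eval_congr _ v φ
        (fun q hq => hagree q ((Finset.mem_sort _).mpr hq))]
      exact hv
    refine ⟨[(τ, 1)], by simp, ?_, ?_, ?_⟩
    · refine ⟨by simp, ?_, by simp⟩
      rintro t ht
      simp only [List.mem_singleton] at ht
      subst ht
      refine ⟨⟨mkTerm_isTerm v l hl, by rw [hτvars], ?_⟩, 1, le_refl 1, by norm_num⟩
      intro q hq
      have hql : q ∈ l := (Finset.mem_sort _).mpr hq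
      rw [hτ_def, mkTerm_pos v q l hl, mkTerm_negv v q l hl]
      cases hvq : v q <;> simp [hql, hvq]
    · -- EntailsFin
      intro M hM
      have h0 := hM _ (Finset.mem_singleton_self _)
      have h1 : FP.interp M
          (FP.conj (FP.probIneq τ .le 1) (FP.probIneq τ .ge 1)) = 1 := h0
      simp only [FP.interp, Ineq.holds] at h1
      have hx := indicator_conj_one h1
      show M.μ (truthSet _ φ) = 1
      refine le_antisymm (M.le_one _) ?_
      have hmono := M.mono (hsub _)
      rw [hx] at hmono
      simpa using hmono
    · -- SetSatisfiable
      have hXW : φ.vars.filter (fun q => v q = true) ⊆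
          FP.varsSet {completePITFormula [(τ, 1)]} := by
        rw [hVθ]; exact Finset.filter_subset _ _
      refine ⟨diracModel ⟨_, hXW⟩, ?_⟩
      intro γ hγ
      rw [Finset.mem_singleton] at hγ
      subst hγ
      have hwτ : (⟨_, hXW⟩ : World _) ∈ truthSet _ τ := by
        show CPL.evalSet (φ.vars.filter (fun q => v q = true)) τ = true
        rw [CPL.evalSet, hτ_def, mkTerm_eval v _ l hl]
        intro q hq
        have hqφ : q ∈ φ.vars := by rw [← hlf]; simp [hq]
        cases hvq : v q <;> simp [Finset.mem_filter, hqφ, hvq]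
      have hμ : (diracModel ⟨_, hXW⟩).μ (truthSet _ τ) = 1 := by
        show (if _ ∈ truthSet _ τ then (1 : ℝ) else 0) = 1
        rw [if_pos hwτ]
      show FP.interp (diracModel ⟨_, hXW⟩)
          (FP.conj (FP.probIneq τ .le 1) (FP.probIneq τ .ge 1)) = 1
      simp [FP.interp, Ineq.holds, hμ]
  · rintro ⟨L, -, -, hEnt, M, hM⟩
    have h : FP.varsSet {completePITFormula L} ⊆
        FP.varsSet {completePITFormula L} ∪ (FP.prob φ).vars := Finset.subset_union_left
    have hθ' : FP.interp (pullModel h M) (completePITFormula L) = 1 := by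
      rw [interp_pull]; exact hM _ (Finset.mem_singleton_self _)
    have h1 : FP.interp (pullModel h M) (FP.prob φ) = 1 := by
      apply hEnt
      intro γ hγ
      rw [Finset.mem_singleton] at hγ
      subst hγ
      exact hθ'
    have hne : (truthSet (FP.varsSet {completePITFormula L} ∪ (FP.prob φ).vars)
        φ).Nonempty := by
      by_contra hemp
      rw [Set.not_nonempty_iff_eq_empty] at hemp
      have hz : (pullModel h M).μ (truthSet
          (FP.varsSet {completePITFormula L} ∪ (FP.prob φ).vars) φ) = 0 := by
        rw [hemp]; exact (pullModel h M).m_empty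
      have hcontra : (0 : ℝ) = 1 := by rw [← hz]; exact h1
      norm_num at hcontra
    obtain ⟨w, hw⟩ := hne
    exact ⟨fun q => decide (q ∈ w.1), hw⟩
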